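/- For every countable ordinal ξ, the Schreier family 𝒮_ξ is regular and its Cantor–Bendixson index equals ω^ξ + 1. -/

import Mathlib

/-- Identify a finite subset of `ℕ` with a point of the Cantor space `ℕ → Bool`. -/
def toCantor (F : Finset ℕ) : ℕ → Bool := fun n => decide (n ∈ F)

/-- Hereditary: closed under subsets. -/
def Hereditary (G : Set (Finset ℕ)) : Prop := ∀ ⦃E F : Finset ℕ⦄, E ⊆ F → F ∈ G → E ∈ G

/-- Spreading: closed under replacing elements by larger ones, keeping the
increasing order and the cardinality. -/
def Spreading (G : Set (Finset ℕ)) : Prop :=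
  ∀ (E : Finset ℕ) (f : ℕ → ℕ), StrictMonoOn f ↑E → (∀ n ∈ E, n ≤ f n) →
    E ∈ G → E.image f ∈ G

/-- Regular: compact (in the Cantor topology), hereditary and spreading. -/
def IsRegularFam (G : Set (Finset ℕ)) : Prop :=
  IsCompact (toCantor '' G) ∧ Hereditary G ∧ Spreading G

/-- The Cantor–Bendixson derivative. -/
def cbDeriv {α : Type*} [TopologicalSpace α] (K : Set α) : Set α :=
  {x | x ∈ K ∧ x ∈ closure (K \ {x})}

/-- Transfinite Cantor–Bendixson iterates. -/
noncomputable def cbIter {α : Type*} [TopologicalSpace α] (K : Set α) (ξ : Ordinal) : Set α :=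
  Ordinal.limitRecOn ξ K (fun _ S => cbDeriv S)
    (fun o _ ih => ⋂ (ζ : Ordinal) (h : ζ < o), ih ζ h)


/-- The successor step of the Schreier hierarchy:
`𝒮_{ξ+1} = {∅} ∪ {⋃_{i=1}^n Eᵢ : ∅ ≠ Eᵢ ∈ 𝒮_ξ, n ≤ E₁ < ⋯ < Eₙ}`. -/
def schreierSucc (S : Set (Finset ℕ)) : Set (Finset ℕ) :=
  {∅} ∪ {E | ∃ (n : ℕ) (hn : 0 < n) (Es : Fin n → Finset ℕ) (mins : Fin n → ℕ),
    (∀ i, Es i ∈ S ∧ (Es i).Nonempty) ∧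
    (∀ i j : Fin n, i < j → ∀ a ∈ Es i, ∀ b ∈ Es j, a < b) ∧
    (∀ i, IsLeast (↑(Es i) : Set ℕ) (mins i)) ∧
    n ≤ mins ⟨0, hn⟩ ∧
    E = Finset.univ.biUnion Es}

/-- An assignment `ξ ↦ 𝒮_ξ` is a Schreier hierarchy if `𝒮₀` is the family of sets with
at most one element, `𝒮_{ξ+1}` is obtained from `𝒮_ξ` by the admissible-union operation,
and at each countable limit ordinal `ξ` there is a sequence `ξₙ ↑ ξ` with
`𝒮_{ξₙ+1} ⊆ 𝒮_{ξ_{n+1}}` and `𝒮_ξ = {E : ∃ n ≤ min E, E ∈ 𝒮_{ξₙ+1}} ∪ {∅}`. -/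
def IsSchreierSystem (S : Ordinal → Set (Finset ℕ)) : Prop :=
  S 0 = {E : Finset ℕ | E.card ≤ 1} ∧
  (∀ ξ : Ordinal, S (ξ + 1) = schreierSucc (S ξ)) ∧
  (∀ ξ : Ordinal, ξ < (Cardinal.aleph 1).ord → Order.IsSuccLimit ξ →
    ∃ f : ℕ → Ordinal, StrictMono f ∧ (∀ n, f n < ξ) ∧ (⨆ n, f n) = ξ ∧
      (∀ n, S (f n + 1) ⊆ S (f (n + 1))) ∧
      S ξ = {E : Finset ℕ | E = ∅ ∨ ∃ n : ℕ, (∀ m ∈ E, n ≤ m) ∧ E ∈ S (f n + 1)})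



def famDeriv (G : Set (Finset ℕ)) : Set (Finset ℕ) :=
  {E | E ∈ G ∧ {n : ℕ | insert n E ∈ G}.Infinite}

noncomputable def famIter (G : Set (Finset ℕ)) (ξ : Ordinal) : Set (Finset ℕ) :=
  Ordinal.limitRecOn ξ G (fun _ S => famDeriv S) (fun o _ ih => ⋂ (ζ) (h : ζ < o), ih ζ h)

@[simp] theorem famIter_zero (G : Set (Finset ℕ)) : famIter G 0 = G :=
  Ordinal.limitRecOn_zero ..

theorem famIter_succ (G : Set (Finset ℕ)) (α : Ordinal) :
    famIter G (α + 1) = famDeriv (famIter G α) := by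
  rw [famIter, Ordinal.add_one_eq_succ, Ordinal.limitRecOn_succ]; rfl

theorem famIter_limit (G : Set (Finset ℕ)) {α : Ordinal} (h : Order.IsSuccLimit α) :
    famIter G α = ⋂ (ζ) (_ : ζ < α), famIter G ζ := by
  rw [famIter, Ordinal.limitRecOn_limit _ _ _ _ h]; rfl

theorem test (α : Ordinal) : True := by
  induction α using Ordinal.limitRecOn with
  | zero => trivial
  | add_one a ih => trivial
  | limit a ha ih => trivial

theorem famDeriv_subset (G : Set (Finset ℕ)) : famDeriv G ⊆ G := fun _ h => h.1

theorem famDeriv_mono {G H : Set (Finset ℕ)} (h : G ⊆ H) : famDeriv G ⊆ famDeriv H :=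
  fun _ hE => ⟨h hE.1, hE.2.mono fun _ hn => h hn⟩

theorem Hereditary.famDeriv {G : Set (Finset ℕ)} (hG : Hereditary G) :
    Hereditary (famDeriv G) := by
  intro E F hEF hF
  refine ⟨hG hEF hF.1, hF.2.mono fun n hn => ?_⟩
  exact hG (Finset.insert_subset_insert _ hEF) hn

theorem famIter_mono {G H : Set (Finset ℕ)} (h : G ⊆ H) (α : Ordinal) :
    famIter G α ⊆ famIter H α := by
  induction α using Ordinal.limitRecOn with
  | zero => simpa using h
  | add_one a ih => rw [famIter_succ, famIter_succ]; exact famDeriv_mono ih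
  | limit a ha ih =>
    rw [famIter_limit _ ha, famIter_limit _ ha]
    exact fun E hE => Set.mem_iInter₂.2 fun ζ hζ => ih ζ hζ (Set.mem_iInter₂.1 hE ζ hζ)

theorem famIter_subset (G : Set (Finset ℕ)) (α : Ordinal) : famIter G α ⊆ G := by
  induction α using Ordinal.limitRecOn with
  | zero => simp
  | add_one a ih => rw [famIter_succ]
                    exact (famDeriv_subset _).trans ih
  | limit a ha ih =>
    rw [famIter_limit _ ha]
    intro E hE
    exact ih 0 ha.pos (Set.mem_iInter₂.1 hE 0 ha.pos)

theorem Hereditary.famIter {G : Set (Finset ℕ)} (hG : Hereditary G) (α : Ordinal) :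
    Hereditary (famIter G α) := by
  induction α using Ordinal.limitRecOn with
  | zero => simpa using hG
  | add_one a ih => rw [famIter_succ]; exact ih.famDeriv
  | limit a ha ih =>
    rw [famIter_limit _ ha]
    intro E F hEF hF
    exact Set.mem_iInter₂.2 fun ζ hζ => ih ζ hζ hEF (Set.mem_iInter₂.1 hF ζ hζ)

theorem famIter_antitone (G : Set (Finset ℕ)) {α β : Ordinal} (h : α ≤ β) :
    famIter G β ⊆ famIter G α := by
  induction β using Ordinal.limitRecOn with
  | zero => rw [nonpos_iff_eq_zero.1 h]
  | add_one a ih =>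
    rcases h.eq_or_lt with rfl | h'
    · rfl
    · rw [famIter_succ]
      exact (famDeriv_subset _).trans (ih (Order.lt_add_one_iff.1 h'))
  | limit a ha ih =>
    rcases eq_or_lt_of_le h with rfl | h'
    · rfl
    · rw [famIter_limit _ ha]
      exact fun E hE => Set.mem_iInter₂.1 hE α h'

theorem famIter_add (G : Set (Finset ℕ)) (γ δ : Ordinal) :
    famIter G (γ + δ) = famIter (famIter G γ) δ := by
  induction δ using Ordinal.limitRecOn with
  | zero => simp
  | add_one a ih =>
    rw [← add_assoc, famIter_succ, famIter_succ, ih]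
  | limit a ha ih =>
    rw [famIter_limit _ ha, famIter_limit _ (Ordinal.isSuccLimit_add γ ha)]
    apply Set.Subset.antisymm
    · intro E hE
      refine Set.mem_iInter₂.2 fun ζ hζ => ?_
      rw [← ih ζ hζ]
      exact Set.mem_iInter₂.1 hE (γ + ζ) ((add_lt_add_iff_left γ).2 hζ)
    · intro E hE
      refine Set.mem_iInter₂.2 fun β hβ => ?_
      rcases le_total β γ with hle | hle
      · exact famIter_antitone _ hle (by
          have := Set.mem_iInter₂.1 hE 0 ha.pos
          rwa [famIter_zero] at this)
      · have hβγ : γ + (β - γ) = β := Ordinal.add_sub_cancel_of_le hle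
        have h2 : β - γ < a := by
          rw [← add_lt_add_iff_left γ, hβγ]; exact hβ
        have := Set.mem_iInter₂.1 hE (β - γ) h2
        rw [← ih _ h2, hβγ] at this
        exact this

/-- `A` lies entirely below `B`. -/
def FinBelow (A B : Finset ℕ) : Prop := ∀ a ∈ A, ∀ b ∈ B, a < b

/-- All sets `A ∪ B` with `A ∈ G`, `B ∈ H`, `A` below `B`. -/
def famOdot (G H : Set (Finset ℕ)) : Set (Finset ℕ) :=
  {E | ∃ A B : Finset ℕ, A ∈ G ∧ B ∈ H ∧ FinBelow A B ∧ E = A ∪ B}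

/-- Restriction of a family to sets with all elements `≥ m`. -/
def famRes (G : Set (Finset ℕ)) (m : ℕ) : Set (Finset ℕ) := {E ∈ G | ∀ k ∈ E, m ≤ k}

@[simp] theorem famRes_zero (G : Set (Finset ℕ)) : famRes G 0 = G := by
  ext E; simp [famRes]

theorem famRes_subset (G : Set (Finset ℕ)) (m : ℕ) : famRes G m ⊆ G := fun _ h => h.1

theorem famIter_graft {G H : Set (Finset ℕ)} {E : Finset ℕ}
    (h : ∀ F ∈ H, E ∪ F ∈ G) (α : Ordinal) :
    ∀ F ∈ famIter H α, E ∪ F ∈ famIter G α := by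
  induction α using Ordinal.limitRecOn with
  | zero => simpa using h
  | add_one a ih =>
    rw [famIter_succ, famIter_succ]
    rintro F ⟨hF, hinf⟩
    refine ⟨ih F hF, hinf.mono fun n hn => ?_⟩
    have := ih _ hn
    rwa [Finset.union_insert] at this
  | limit a ha ih =>
    rw [famIter_limit _ ha, famIter_limit _ ha]
    intro F hF
    exact Set.mem_iInter₂.2 fun ζ hζ => ih ζ hζ F (Set.mem_iInter₂.1 hF ζ hζ)

theorem famIter_loc {G H : Set (Finset ℕ)} (α : Ordinal) :
    ∀ E ∈ famIter G α, (∀ F ∈ G, E ⊆ F → F ∈ H) → E ∈ famIter H α := by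
  induction α using Ordinal.limitRecOn with
  | zero => intro E hE h; simp only [famIter_zero] at *; exact h E hE subset_rfl
  | add_one a ih =>
    rw [famIter_succ, famIter_succ]
    rintro E ⟨hE, hinf⟩ h
    refine ⟨ih E hE h, hinf.mono fun n hn => ?_⟩
    exact ih _ hn fun F hF hsub => h F hF ((Finset.subset_insert n E).trans hsub)
  | limit a ha ih =>
    rw [famIter_limit _ ha, famIter_limit _ ha]
    intro E hE h
    exact Set.mem_iInter₂.2 fun ζ hζ => ih ζ hζ E (Set.mem_iInter₂.1 hE ζ hζ) h

theorem famDeriv_union {G H : Set (Finset ℕ)} (hG : Hereditary G) (hH : Hereditary H) :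
    famDeriv (G ∪ H) ⊆ famDeriv G ∪ famDeriv H := by
  rintro E ⟨_, hinf⟩
  have : {n : ℕ | insert n E ∈ G} ∪ {n : ℕ | insert n E ∈ H} = {n : ℕ | insert n E ∈ G ∪ H} := by
    ext n; simp [Set.mem_union]
  rw [← this] at hinf
  rcases Set.infinite_union.1 hinf with h | h
  · obtain ⟨n, hn⟩ := h.nonempty
    exact Or.inl ⟨hG (Finset.subset_insert n E) hn, h⟩
  · obtain ⟨n, hn⟩ := h.nonempty
    exact Or.inr ⟨hH (Finset.subset_insert n E) hn, h⟩

theorem Hereditary.union {G H : Set (Finset ℕ)} (hG : Hereditary G) (hH : Hereditary H) :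
    Hereditary (G ∪ H) := by
  rintro E F hEF (h | h)
  exacts [Or.inl (hG hEF h), Or.inr (hH hEF h)]

theorem famIter_union {G H : Set (Finset ℕ)} (hG : Hereditary G) (hH : Hereditary H)
    (α : Ordinal) : famIter (G ∪ H) α = famIter G α ∪ famIter H α := by
  induction α using Ordinal.limitRecOn with
  | zero => simp
  | add_one a ih =>
    rw [famIter_succ, famIter_succ, famIter_succ]
    apply Set.Subset.antisymm
    · rw [ih]
      exact famDeriv_union (hG.famIter a) (hH.famIter a)
    · rw [ih]
      rintro E (h | h)
      exacts [famDeriv_mono Set.subset_union_left h, famDeriv_mono Set.subset_union_right h]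
  | limit a ha ih =>
    rw [famIter_limit _ ha]
    apply Set.Subset.antisymm
    · intro E hE
      by_cases hcof : ∀ γ, γ < a → ∃ δ, δ < a ∧ γ ≤ δ ∧ E ∈ famIter G δ
      · left
        rw [famIter_limit _ ha]
        refine Set.mem_iInter₂.2 fun ζ hζ => ?_
        obtain ⟨δ, hδa, hζδ, hEδ⟩ := hcof ζ hζ
        exact famIter_antitone _ hζδ hEδ
      · push_neg at hcof
        obtain ⟨γ₀, hγ₀, hbd⟩ := hcof
        right
        rw [famIter_limit _ ha]
        refine Set.mem_iInter₂.2 fun ζ hζ => ?_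
        have hmax : max ζ γ₀ < a := max_lt hζ hγ₀
        have := Set.mem_iInter₂.1 hE (max ζ γ₀) hmax
        rw [ih _ hmax] at this
        rcases this with h | h
        · exact absurd h (hbd _ hmax (le_max_right _ _))
        · exact famIter_antitone _ (le_max_left _ _) h
    · rintro E (h | h) <;>
        exact Set.mem_iInter₂.2 fun ζ hζ => by
          rw [ih _ hζ]
          first
          | exact Or.inl (famIter_antitone _ hζ.le h)
          | exact Or.inr (famIter_antitone _ hζ.le h)

theorem famOdot_mono_right {G H H' : Set (Finset ℕ)} (h : H ⊆ H') :
    famOdot G H ⊆ famOdot G H' := by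
  rintro E ⟨A, B, hA, hB, hAB, rfl⟩
  exact ⟨A, B, hA, h hB, hAB, rfl⟩

theorem Hereditary.odot {G H : Set (Finset ℕ)} (hG : Hereditary G) (hH : Hereditary H) :
    Hereditary (famOdot G H) := by
  rintro E F hEF ⟨A, B, hA, hB, hAB, rfl⟩
  refine ⟨E ∩ A, E ∩ B, hG Finset.inter_subset_right hA, hH Finset.inter_subset_right hB,
    fun a ha b hb => hAB a (Finset.mem_of_mem_inter_right ha) b (Finset.mem_of_mem_inter_right hb),
    ?_⟩
  rw [← Finset.inter_union_distrib_left]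
  exact (Finset.inter_eq_left.2 hEF).symm

theorem famOdot_subset_of_subset_empty {G H : Set (Finset ℕ)} (h : H ⊆ {∅}) :
    famOdot G H ⊆ G := by
  rintro E ⟨A, B, hA, hB, hAB, rfl⟩
  have : B = ∅ := h hB
  subst this
  simpa using hA

theorem famDeriv_odot {G H : Set (Finset ℕ)} (hG : Hereditary G) (hH : Hereditary H) :
    famDeriv (famOdot G H) ⊆ famOdot G (famDeriv H) ∪ G := by
  rintro E ⟨hE, hinf⟩
  classical
  set N : Set ℕ := {n | insert n E ∈ famOdot G H ∧ ∀ a ∈ E, a < n} with hNdef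
  have hNinf : N.Infinite := by
    have hsub : {n | insert n E ∈ famOdot G H} \ {n | n ≤ E.sup id} ⊆ N := by
      intro n hn
      refine ⟨hn.1, fun a ha => ?_⟩
      have : ¬ n ≤ E.sup id := hn.2
      have h2 : a ≤ E.sup id := Finset.le_sup (f := id) ha
      omega
    exact (hinf.diff (Set.finite_Iic (E.sup id))).mono hsub
  by_cases hc : {n ∈ N | insert n E ∈ G}.Infinite
  · obtain ⟨n, hn⟩ := hc.nonempty
    exact Or.inr (hG (Finset.subset_insert n E) hn.2)
  · have hN' : {n ∈ N | insert n E ∉ G}.Infinite := by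
      have : N \ {n ∈ N | insert n E ∈ G} ⊆ {n ∈ N | insert n E ∉ G} := by
        intro n hn; exact ⟨hn.1, fun hg => hn.2 ⟨hn.1, hg⟩⟩
      exact ((hNinf.diff (Set.not_infinite.1 hc)).mono this)
    -- every n in N' yields a split with A ⊆ E
    have key : ∀ n ∈ {n ∈ N | insert n E ∉ G},
        ∃ A ∈ E.powerset, A ∈ G ∧ insert n (E \ A) ∈ H ∧ FinBelow A (insert n (E \ A)) := by
      rintro n ⟨⟨⟨A, B, hA, hB, hAB, hEq⟩, hlt⟩, hnG⟩
      have hnB : n ∈ B := by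
        by_contra hnB
        have hnA : n ∈ A := by
          have : n ∈ insert n E := Finset.mem_insert_self n E
          rw [hEq] at this
          rcases Finset.mem_union.1 this with h | h
          · exact h
          · exact absurd h hnB
        have hBempty : B = ∅ := by
          by_contra hBne
          obtain ⟨b, hb⟩ := Finset.nonempty_iff_ne_empty.2 hBne
          have hnb : n < b := hAB n hnA b hb
          have : b ∈ insert n E := by rw [hEq]; exact Finset.mem_union_right _ hb
          rcases Finset.mem_insert.1 this with rfl | h
          · omega
          · have := hlt b h; omega
        rw [hBempty, Finset.union_empty] at hEq
        exact hnG (hEq ▸ hA)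
      have hnA : n ∉ A := fun hnA => lt_irrefl n (hAB n hnA n hnB)
      have hAE : A ⊆ E := by
        intro a ha
        have : a ∈ insert n E := by rw [hEq]; exact Finset.mem_union_left _ ha
        rcases Finset.mem_insert.1 this with rfl | h
        · exact absurd ha hnA
        · exact h
      have hBeq : B = insert n (E \ A) := by
        have hdisj : Disjoint A B := by
          rw [Finset.disjoint_left]
          intro a ha hab
          exact lt_irrefl a (hAB a ha a hab)
        ext b
        constructor
        · intro hb
          have hbE : b ∈ insert n E := by rw [hEq]; exact Finset.mem_union_right _ hb
          rcases Finset.mem_insert.1 hbE with rfl | h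
          · exact Finset.mem_insert_self _ _
          · refine Finset.mem_insert_of_mem (Finset.mem_sdiff.2 ⟨h, ?_⟩)
            exact fun hbA => (Finset.disjoint_left.1 hdisj hbA) hb
        · intro hb
          rcases Finset.mem_insert.1 hb with rfl | h
          · exact hnB
          · have hbE := Finset.mem_sdiff.1 h
            have : b ∈ A ∪ B := by rw [← hEq]; exact Finset.mem_insert_of_mem hbE.1
            rcases Finset.mem_union.1 this with h' | h'
            · exact absurd h' hbE.2
            · exact h'
      refine ⟨A, Finset.mem_powerset.2 hAE, hA, ?_, ?_⟩
      · rw [← hBeq]; exact hB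
      · rw [← hBeq]; exact hAB
    -- pigeonhole over the finitely many subsets of E
    have cover : {n ∈ N | insert n E ∉ G} ⊆
        ⋃ A ∈ (E.powerset : Finset (Finset ℕ)),
          {n : ℕ | A ∈ G ∧ insert n (E \ A) ∈ H ∧ FinBelow A (insert n (E \ A))} := by
      intro n hn
      obtain ⟨A, hApow, h1, h2, h3⟩ := key n hn
      exact Set.mem_biUnion hApow ⟨h1, h2, h3⟩
    have : ∃ A ∈ (E.powerset : Finset (Finset ℕ)),
        {n : ℕ | A ∈ G ∧ insert n (E \ A) ∈ H ∧ FinBelow A (insert n (E \ A))}.Infinite := by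
      by_contra hfin
      push_neg at hfin
      exact hN' (Set.Finite.subset (Set.Finite.biUnion (E.powerset.finite_toSet)
        fun A hA => hfin A hA) cover)
    obtain ⟨A, hApow, hCinf⟩ := this
    obtain ⟨n₀, hn₀⟩ := hCinf.nonempty
    left
    refine ⟨A, E \ A, hn₀.1, ⟨hH (Finset.subset_insert _ _) hn₀.2.1, ?_⟩, ?_, ?_⟩
    · exact hCinf.mono fun n hn => hn.2.1
    · exact fun a ha b hb => hn₀.2.2 a ha b (Finset.mem_insert_of_mem hb)
    · exact (Finset.union_sdiff_of_subset (Finset.mem_powerset.1 hApow)).symm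

theorem famIter_odot {G H : Set (Finset ℕ)} (hG : Hereditary G) (hH : Hereditary H)
    (β : Ordinal) : famIter (famOdot G H) β ⊆ famOdot G (famIter H β) ∪ G := by
  induction β using Ordinal.limitRecOn with
  | zero => simp
  | add_one a ih =>
    rw [famIter_succ, famIter_succ]
    calc famDeriv (famIter (famOdot G H) a)
        ⊆ famDeriv (famOdot G (famIter H a) ∪ G) := famDeriv_mono ih
      _ ⊆ famDeriv (famOdot G (famIter H a)) ∪ famDeriv G :=
          famDeriv_union (hG.odot (hH.famIter a)) hG
      _ ⊆ (famOdot G (famDeriv (famIter H a)) ∪ G) ∪ G := by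
          apply Set.union_subset_union
          · exact famDeriv_odot hG (hH.famIter a)
          · exact famDeriv_subset G
      _ ⊆ famOdot G (famDeriv (famIter H a)) ∪ G := by
          rw [Set.union_assoc, Set.union_self]
  | limit a ha ih =>
    intro E hE
    rw [famIter_limit _ ha] at hE
    classical
    by_cases hEG : E ∈ G
    · exact Or.inr hEG
    have hsplit : ∀ ζ, ζ < a → ∃ A, A ⊆ E ∧ A ∈ G ∧ E \ A ∈ famIter H ζ ∧ FinBelow A (E \ A) := by
      intro ζ hζ
      have := ih ζ hζ (Set.mem_iInter₂.1 hE ζ hζ)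
      rcases this with ⟨A, B, hA, hB, hAB, hEq⟩ | h
      · have hdisj : Disjoint A B := by
          rw [Finset.disjoint_left]
          exact fun a ha hab => lt_irrefl a (hAB a ha a hab)
        have hBeq : B = E \ A := by
          rw [hEq]; exact (Finset.union_sdiff_cancel_left hdisj).symm
        exact ⟨A, by rw [hEq]; exact Finset.subset_union_left, hA, hBeq ▸ hB,
          hBeq ▸ hAB⟩
      · exact absurd h hEG
    by_cases hgood : ∃ A, A ⊆ E ∧ ∀ ζ, ζ < a → (A ∈ G ∧ E \ A ∈ famIter H ζ ∧ FinBelow A (E \ A))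
    · obtain ⟨A, hAE, hall⟩ := hgood
      left
      refine ⟨A, E \ A, (hall 0 ha.pos).1, ?_, (hall 0 ha.pos).2.2, ?_⟩
      · rw [famIter_limit _ ha]
        exact Set.mem_iInter₂.2 fun ζ hζ => (hall ζ hζ).2.1
      · exact (Finset.union_sdiff_of_subset hAE).symm
    · exfalso
      push_neg at hgood
      have hbad : ∀ A ∈ (E.powerset : Finset (Finset ℕ)),
          ∃ ζ, ζ < a ∧ ¬(A ∈ G ∧ E \ A ∈ famIter H ζ ∧ FinBelow A (E \ A)) := by
        intro A hA
        obtain ⟨ζ, hζ, hP⟩ := hgood A (Finset.mem_powerset.1 hA)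
        exact ⟨ζ, hζ, fun h => hP h.1 h.2.1 h.2.2⟩
      choose g hg1 hg2 using hbad
      set ζ' : Ordinal := E.powerset.sup (fun A => if h : A ∈ E.powerset then g A h else 0)
        with hζ'def
      have hζ'a : ζ' < a := by
        apply Finset.sup_lt_iff (by exact ha.pos) |>.2
        intro A hA
        rw [dif_pos hA]
        exact hg1 A hA
      obtain ⟨A, hAE, hAG, hAH, hAB⟩ := hsplit ζ' hζ'a
      have hApow : A ∈ E.powerset := Finset.mem_powerset.2 hAE
      refine hg2 A hApow ⟨hAG, ?_, hAB⟩
      have hle : g A hApow ≤ ζ' := by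
        have := Finset.le_sup (f := fun A => if h : A ∈ E.powerset then g A h else 0) hApow
        simp only [dif_pos hApow] at this
        exact this
      exact famIter_antitone _ hle hAH

/-- Unions of at most `j` successive blocks from `G`. -/
def famB (G : Set (Finset ℕ)) : ℕ → Set (Finset ℕ)
  | 0 => {∅}
  | j + 1 => famOdot G (famB G j)

theorem Hereditary.famB {G : Set (Finset ℕ)} (hG : Hereditary G) (j : ℕ) :
    Hereditary (famB G j) := by
  induction j with
  | zero =>
    intro E F hEF hF
    have hF' : F = ∅ := hF
    subst hF'
    exact Finset.subset_empty.1 hEF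
  | succ j ih => exact hG.odot ih

theorem famB_empty_mem {G : Set (Finset ℕ)} (hG0 : ∅ ∈ G) (j : ℕ) : ∅ ∈ famB G j := by
  induction j with
  | zero => rfl
  | succ j ih => exact ⟨∅, ∅, hG0, ih, by simp [FinBelow], by simp⟩

theorem famB_mono {G : Set (Finset ℕ)} (hG0 : ∅ ∈ G) : ∀ {j k : ℕ}, j ≤ k →
    famB G j ⊆ famB G k := by
  have step : ∀ j, famB G j ⊆ famB G (j + 1) := by
    intro j
    induction j with
    | zero =>
      rintro E hE
      rw [Set.mem_singleton_iff.1 hE]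
      exact famB_empty_mem hG0 1
    | succ j ih => exact famOdot_mono_right ih
  intro j k hjk
  induction k with
  | zero => rw [Nat.le_zero.1 hjk]
  | succ k ih =>
    rcases Nat.le_succ_iff.1 hjk with h | h
    · exact (ih h).trans (step k)
    · rw [h]

theorem famB_iter_subset {G : Set (Finset ℕ)} (hG : Hereditary G) {a : Ordinal}
    (hUB : famIter G a ⊆ {∅}) : ∀ j : ℕ, famIter (famB G j) (a * j) ⊆ {∅} := by
  intro j
  induction j with
  | zero => simp [famB]
  | succ j ih =>
    have hcast : ((j + 1 : ℕ) : Ordinal) = (j : Ordinal) + 1 := Nat.cast_succ j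
    rw [hcast, mul_add_one, famIter_add]
    have h1 : famIter (famB G (j + 1)) (a * j) ⊆ G := by
      have := famIter_odot hG (hG.famB j) (a * j)
      refine (this.trans ?_)
      apply Set.union_subset _ subset_rfl
      exact famOdot_subset_of_subset_empty ih
    exact (famIter_mono h1 a).trans hUB

theorem biUnion_mem_famB {G : Set (Finset ℕ)} : ∀ (n : ℕ) (Es : Fin n → Finset ℕ),
    (∀ i, Es i ∈ G) → (∀ i j : Fin n, i < j → ∀ a ∈ Es i, ∀ b ∈ Es j, a < b) →
    Finset.univ.biUnion Es ∈ famB G n := by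
  intro n
  induction n with
  | zero => intro Es _ _; simp [famB]
  | succ n ih =>
    intro Es hmem hsep
    have hsplit : Finset.univ.biUnion Es = Es 0 ∪ Finset.univ.biUnion (fun i : Fin n => Es i.succ) := by
      ext a
      simp only [Finset.mem_biUnion, Finset.mem_univ, true_and, Finset.mem_union]
      constructor
      · rintro ⟨i, hi⟩
        rcases Fin.eq_zero_or_eq_succ i with rfl | ⟨j, rfl⟩
        · exact Or.inl hi
        · exact Or.inr ⟨j, hi⟩
      · rintro (h | ⟨j, hj⟩)
        exacts [⟨0, h⟩, ⟨j.succ, hj⟩]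
    rw [hsplit]
    refine ⟨Es 0, Finset.univ.biUnion (fun i : Fin n => Es i.succ), hmem 0,
      ih _ (fun i => hmem i.succ) (fun i j hij => hsep i.succ j.succ (by simpa using hij)), ?_, rfl⟩
    intro a ha b hb
    obtain ⟨i, _, hi⟩ := Finset.mem_biUnion.1 hb
    exact hsep 0 i.succ (Fin.succ_pos i) a ha b hi

def schreierSucc' (S : Set (Finset ℕ)) : Set (Finset ℕ) :=
  {∅} ∪ {E | ∃ (n : ℕ) (hn : 0 < n) (Es : Fin n → Finset ℕ) (mins : Fin n → ℕ),
    (∀ i, Es i ∈ S ∧ (Es i).Nonempty) ∧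
    (∀ i j : Fin n, i < j → ∀ a ∈ Es i, ∀ b ∈ Es j, a < b) ∧
    (∀ i, IsLeast (↑(Es i) : Set ℕ) (mins i)) ∧
    n ≤ mins ⟨0, hn⟩ ∧
    E = Finset.univ.biUnion Es}

theorem Hereditary.famRes {G : Set (Finset ℕ)} (hG : Hereditary G) (m : ℕ) :
    Hereditary (famRes G m) :=
  fun _E _F hEF hF => ⟨hG hEF hF.1, fun k hk => hF.2 k (hEF hk)⟩

theorem empty_mem_schreierSucc (G : Set (Finset ℕ)) : ∅ ∈ schreierSucc' G := Or.inl rfl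

theorem schreierSucc_upper {G : Set (Finset ℕ)} (hG : Hereditary G) (hG0 : ∅ ∈ G)
    {a : Ordinal} (hUB : famIter G a ⊆ {∅}) :
    famIter (schreierSucc' G) (a * Ordinal.omega0) ⊆ {∅} := by
  intro E hE
  by_cases hne : E = ∅
  · exact hne
  exfalso
  have hEne : E.Nonempty := Finset.nonempty_iff_ne_empty.2 hne
  set q := E.min' hEne with hq
  have hqE : q ∈ E := E.min'_mem hEne
  -- every superset of E in schreierSucc' G is in famB G q
  have hsup : ∀ F ∈ schreierSucc' G, E ⊆ F → F ∈ famB G q := by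
    rintro F (hF | ⟨n, hn, Es, mins, hmem, hsep, hleast, hnmin, rfl⟩) hEF
    · rw [Set.mem_singleton_iff.1 hF] at hEF
      exact absurd (Finset.subset_empty.1 hEF) hne
    · have hFB : Finset.univ.biUnion Es ∈ famB G n :=
        biUnion_mem_famB n Es (fun i => (hmem i).1) hsep
      have hnq : n ≤ q := by
        have hqF : q ∈ Finset.univ.biUnion Es := hEF hqE
        obtain ⟨i, _, hi⟩ := Finset.mem_biUnion.1 hqF
        rcases eq_or_ne i ⟨0, hn⟩ with rfl | hine
        · exact hnmin.trans ((hleast _).2 hi)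
        · have h0i : (⟨0, hn⟩ : Fin n) < i := by
            rw [Fin.lt_def]
            rcases Nat.eq_zero_or_pos (i : ℕ) with h | h
            · exact absurd (Fin.ext h) hine
            · exact h
          have := hsep _ _ h0i (mins ⟨0, hn⟩) ((hleast ⟨0, hn⟩).1) q hi
          omega
      exact famB_mono hG0 hnq hFB
  have hEq : E ∈ famIter (famB G q) (a * q) := by
    refine famIter_loc _ E ?_ hsup
    refine famIter_antitone _ ?_ hE
    apply mul_le_mul_right
    exact (Ordinal.lt_omega0.2 ⟨q, rfl⟩).le
  exact hne (famB_iter_subset hG hUB q hEq)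

theorem schreierSucc_lower_aux {G : Set (Finset ℕ)} {a : Ordinal}
    (hLB : ∀ m : ℕ, ∅ ∈ famIter (famRes G m) a) : ∀ k : ℕ,
    (∀ (m j : ℕ) (hj : 0 < j) (Es : Fin j → Finset ℕ) (mins : Fin j → ℕ),
      (∀ i, Es i ∈ G ∧ (Es i).Nonempty) →
      (∀ i i' : Fin j, i < i' → ∀ x ∈ Es i, ∀ y ∈ Es i', x < y) →
      (∀ i, IsLeast (↑(Es i) : Set ℕ) (mins i)) →
      j + k ≤ mins ⟨0, hj⟩ →
      (∀ i, ∀ x ∈ Es i, m ≤ x) →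
      Finset.univ.biUnion Es ∈ famIter (famRes (schreierSucc' G) m) (a * k)) ∧
    (∀ m : ℕ, ∅ ∈ famIter (famRes (schreierSucc' G) m) (a * k)) := by
  intro k
  induction k with
  | zero =>
    constructor
    · intro m j hj Es mins hmem hsep hleast hbound helem
      rw [Nat.cast_zero, mul_zero, famIter_zero]
      refine ⟨Or.inr ⟨j, hj, Es, mins, hmem, hsep, hleast, by omega, rfl⟩, ?_⟩
      intro x hx
      obtain ⟨i, _, hi⟩ := Finset.mem_biUnion.1 hx
      exact helem i x hi
    · intro m
      rw [Nat.cast_zero, mul_zero, famIter_zero]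
      exact ⟨empty_mem_schreierSucc G, by simp⟩
  | succ k ih =>
    have hmul : a * ((k + 1 : ℕ) : Ordinal) = a * k + a := by
      rw [Nat.cast_succ, mul_add_one]
    constructor
    · intro m j hj Es mins hmem hsep hleast hbound helem
      set E := Finset.univ.biUnion Es with hE
      have hEne : E.Nonempty := by
        obtain ⟨x, hx⟩ := (hmem ⟨0, hj⟩).2
        exact ⟨x, Finset.mem_biUnion.2 ⟨⟨0, hj⟩, Finset.mem_univ _, hx⟩⟩
      set b := E.sup id with hb
      have hEb : ∀ x ∈ E, x ≤ b := fun x hx => Finset.le_sup (f := id) hx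
      have key : ∀ F ∈ famRes G (b + 1), E ∪ F ∈ famIter (famRes (schreierSucc' G) m) (a * k) := by
        intro F hF
        by_cases hFe : F = ∅
        · subst hFe
          rw [Finset.union_empty]
          exact (ih.1 m j hj Es mins hmem hsep hleast (by omega) helem)
        · have hFne : F.Nonempty := Finset.nonempty_iff_ne_empty.2 hFe
          -- extended decomposition with j+1 blocks
          set Es' : Fin (j + 1) → Finset ℕ :=
            fun i => if h : (i : ℕ) < j then Es ⟨i, h⟩ else F with hEs'
          set mins' : Fin (j + 1) → ℕ :=
            fun i => if h : (i : ℕ) < j then mins ⟨i, h⟩ else F.min' hFne with hmins'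
          have hunion : Finset.univ.biUnion Es' = E ∪ F := by
            ext x
            simp only [Finset.mem_biUnion, Finset.mem_univ, true_and, Finset.mem_union, hE]
            constructor
            · rintro ⟨i, hi⟩
              by_cases h : (i : ℕ) < j
              · rw [hEs'] at hi; simp only [dif_pos h] at hi
                exact Or.inl ⟨⟨(i : ℕ), h⟩, hi⟩
              · rw [hEs'] at hi; simp only [dif_neg h] at hi
                exact Or.inr hi
            · rintro (⟨i, hi⟩ | h)
              · refine ⟨⟨(i : ℕ), by omega⟩, ?_⟩
                show x ∈ Es' ⟨(i : ℕ), by omega⟩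
                rw [hEs']
                have hcond : ((⟨(i : ℕ), by omega⟩ : Fin (j + 1)) : ℕ) < j := i.2
                simp only [dif_pos hcond]
                exact hi
              · refine ⟨⟨j, by omega⟩, ?_⟩
                show x ∈ Es' ⟨j, by omega⟩
                rw [hEs']
                simp only [dif_neg (lt_irrefl j)]
                exact h
          have hFbig : ∀ y ∈ F, b + 1 ≤ y := hF.2
          have hres := ih.1 m (j + 1) (by omega) Es' mins' ?_ ?_ ?_ ?_ ?_
          · rw [hunion] at hres; exact hres
          · intro i
            by_cases h : (i : ℕ) < j
            · simp only [hEs', dif_pos h]; exact hmem _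
            · simp only [hEs', dif_neg h]; exact ⟨hF.1, hFne⟩
          · intro i i' hii' x hx y hy
            by_cases h : (i : ℕ) < j <;> by_cases h' : (i' : ℕ) < j
            · simp only [hEs', dif_pos h] at hx
              simp only [hEs', dif_pos h'] at hy
              exact hsep _ _ (Fin.mk_lt_mk.2 (Fin.lt_def.1 hii')) x hx y hy
            · simp only [hEs', dif_pos h] at hx
              simp only [hEs', dif_neg h'] at hy
              have hxE : x ∈ E := Finset.mem_biUnion.2 ⟨⟨i, h⟩, Finset.mem_univ _, hx⟩
              have := hEb x hxE
              have := hFbig y hy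
              omega
            · exfalso
              have := Fin.lt_def.1 hii'
              omega
            · exfalso
              have := Fin.lt_def.1 hii'
              omega
          · intro i
            by_cases h : (i : ℕ) < j
            · simp only [hEs', hmins', dif_pos h]; exact hleast _
            · simp only [hEs', hmins', dif_neg h]
              exact ⟨F.min'_mem hFne, fun y hy => F.min'_le y hy⟩
          · have h0 : ((⟨0, by omega⟩ : Fin (j + 1)) : ℕ) < j := hj
            simp only [hmins', dif_pos h0]
            have : mins ⟨0, hj⟩ = mins ⟨(⟨0, by omega⟩ : Fin (j+1)), h0⟩ := by congr
            omega
          · intro i x hx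
            by_cases h : (i : ℕ) < j
            · simp only [hEs', dif_pos h] at hx
              exact helem _ x hx
            · simp only [hEs', dif_neg h] at hx
              have h1 := hFbig x hx
              obtain ⟨z, hz⟩ := hEne
              obtain ⟨i0, _, hi0⟩ := Finset.mem_biUnion.1 hz
              have h2 : m ≤ z := helem i0 z hi0
              have h3 : z ≤ b := hEb z hz
              omega
      rw [hmul, famIter_add]
      have := famIter_graft key a ∅ (hLB (b + 1))
      rwa [Finset.union_empty] at this
    · intro m
      have key : ∀ F ∈ famRes G (max m (k + 1)),
          (∅ : Finset ℕ) ∪ F ∈ famIter (famRes (schreierSucc' G) m) (a * k) := by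
        intro F hF
        rw [Finset.empty_union]
        by_cases hFe : F = ∅
        · subst hFe; exact ih.2 m
        · have hFne : F.Nonempty := Finset.nonempty_iff_ne_empty.2 hFe
          have hres := ih.1 m 1 one_pos (fun _ => F) (fun _ => F.min' hFne) ?_ ?_ ?_ ?_ ?_
          · rwa [show Finset.univ.biUnion (fun _ : Fin 1 => F) = F from by ext x; simp] at hres
          · exact fun _ => ⟨hF.1, hFne⟩
          · intro i i' hii' x hx y hy
            exfalso
            have h1 := i.2
            have h2 := i'.2
            have h3 := Fin.lt_def.1 hii'
            omega
          · exact fun _ => ⟨F.min'_mem hFne, fun y hy => F.min'_le y hy⟩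
          · have h1 := hF.2 (F.min' hFne) (F.min'_mem hFne)
            omega
          · intro i x hx
            have := hF.2 x hx
            omega
      rw [hmul, famIter_add]
      have := famIter_graft key a ∅ (hLB (max m (k + 1)))
      rwa [Finset.union_empty] at this

theorem schreierSucc_lower {G : Set (Finset ℕ)} {a : Ordinal} (ha : 0 < a)
    (hLB : ∀ m : ℕ, ∅ ∈ famIter (famRes G m) a) (m : ℕ) :
    ∅ ∈ famIter (famRes (schreierSucc' G) m) (a * Ordinal.omega0) := by
  have hlim : Order.IsSuccLimit (a * Ordinal.omega0) := Ordinal.isSuccLimit_mul ha Ordinal.isSuccLimit_omega0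
  rw [famIter_limit _ hlim]
  refine Set.mem_iInter₂.2 fun β hβ => ?_
  obtain ⟨c, hc, hβc⟩ := (Ordinal.lt_mul_iff_of_isSuccLimit Ordinal.isSuccLimit_omega0).1 hβ
  obtain ⟨k, rfl⟩ := Ordinal.lt_omega0.1 hc
  exact famIter_antitone _ hβc.le ((schreierSucc_lower_aux hLB k).2 m)

theorem mins0_le {n : ℕ} {hn : 0 < n} {Es : Fin n → Finset ℕ} {mins : Fin n → ℕ}
    (hsep : ∀ i j : Fin n, i < j → ∀ a ∈ Es i, ∀ b ∈ Es j, a < b)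
    (hleast : ∀ i, IsLeast (↑(Es i) : Set ℕ) (mins i)) :
    ∀ i, ∀ x ∈ Es i, mins ⟨0, hn⟩ ≤ x := by
  intro i x hx
  rcases eq_or_ne i ⟨0, hn⟩ with rfl | hine
  · exact (hleast _).2 hx
  · have h0i : (⟨0, hn⟩ : Fin n) < i := by
      rw [Fin.lt_def]
      rcases Nat.eq_zero_or_pos (i : ℕ) with h | h
      · exact absurd (Fin.ext h) hine
      · exact h
    exact (hsep _ _ h0i (mins ⟨0, hn⟩) ((hleast ⟨0, hn⟩).1) x hx).le

theorem Hereditary.schreierSucc' {G : Set (Finset ℕ)} (hG : Hereditary G) :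
    Hereditary (schreierSucc' G) := by
  classical
  rintro E F hEF (hF | ⟨n, hn, Es, mins, hmem, hsep, hleast, hnmin, rfl⟩)
  · left
    rw [Set.mem_singleton_iff.1 hF] at hEF
    exact Finset.subset_empty.1 hEF
  · by_cases hEe : E = ∅
    · exact Or.inl hEe
    right
    have hEne : E.Nonempty := Finset.nonempty_iff_ne_empty.2 hEe
    set I : Finset (Fin n) := Finset.univ.filter (fun i => (E ∩ Es i).Nonempty) with hI
    have hIne : I.Nonempty := by
      obtain ⟨x, hx⟩ := hEne
      obtain ⟨i, _, hi⟩ := Finset.mem_biUnion.1 (hEF hx)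
      exact ⟨i, Finset.mem_filter.2 ⟨Finset.mem_univ _, ⟨x, Finset.mem_inter.2 ⟨hx, hi⟩⟩⟩⟩
    have hn' : 0 < I.card := Finset.card_pos.2 hIne
    set e : Fin I.card ≃o {x // x ∈ I} := I.orderIsoOfFin rfl with he
    have hint : ∀ j : Fin I.card, (E ∩ Es (e j)).Nonempty := by
      intro j
      exact (Finset.mem_filter.1 (e j).2).2
    refine ⟨I.card, hn', fun j => E ∩ Es (e j), fun j => (E ∩ Es (e j)).min' (hint j),
      ?_, ?_, ?_, ?_, ?_⟩
    · exact fun j => ⟨hG Finset.inter_subset_right (hmem _).1, hint j⟩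
    · intro j j' hjj' x hx y hy
      have hee : (e j : Fin n) < (e j' : Fin n) := e.strictMono hjj'
      exact hsep _ _ hee x (Finset.mem_inter.1 hx).2 y (Finset.mem_inter.1 hy).2
    · exact fun j => ⟨(E ∩ Es (e j)).min'_mem (hint j),
        fun y hy => (E ∩ Es (e j)).min'_le y hy⟩
    · have h1 : I.card ≤ n := by
        have := Finset.card_le_univ I
        simpa using this
      have h2 : mins ⟨0, hn⟩ ≤ (E ∩ Es (e ⟨0, hn'⟩)).min' (hint _) := by
        have hm := (E ∩ Es (e ⟨0, hn'⟩)).min'_mem (hint _)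
        exact mins0_le hsep hleast _ _ (Finset.mem_inter.1 hm).2
      show I.card ≤ (E ∩ Es (e ⟨0, hn'⟩)).min' (hint _)
      omega
    · ext x
      simp only [Finset.mem_biUnion, Finset.mem_univ, true_and]
      constructor
      · intro hx
        obtain ⟨i, _, hi⟩ := Finset.mem_biUnion.1 (hEF hx)
        have hiI : i ∈ I := Finset.mem_filter.2 ⟨Finset.mem_univ _,
          ⟨x, Finset.mem_inter.2 ⟨hx, hi⟩⟩⟩
        refine ⟨e.symm ⟨i, hiI⟩, Finset.mem_inter.2 ⟨hx, ?_⟩⟩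
        rw [OrderIso.apply_symm_apply]
        exact hi
      · rintro ⟨j, hj⟩
        exact (Finset.mem_inter.1 hj).1

theorem Spreading.schreierSucc' {G : Set (Finset ℕ)} (hG : Spreading G) :
    Spreading (schreierSucc' G) := by
  rintro E f hmono hle (hE | ⟨n, hn, Es, mins, hmem, hsep, hleast, hnmin, rfl⟩)
  · left
    rw [Set.mem_singleton_iff.1 hE]
    exact Finset.image_empty f
  · right
    have hsub : ∀ i, Es i ⊆ Finset.univ.biUnion Es := fun i x hx =>
      Finset.mem_biUnion.2 ⟨i, Finset.mem_univ _, hx⟩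
    have hmono' : ∀ i, StrictMonoOn f ↑(Es i) := fun i =>
      hmono.mono (Finset.coe_subset.2 (hsub i))
    refine ⟨n, hn, fun i => (Es i).image f, fun i => f (mins i), ?_, ?_, ?_, ?_, ?_⟩
    · intro i
      refine ⟨hG (Es i) f (hmono' i) (fun x hx => hle x (hsub i hx)) (hmem i).1,
        (hmem i).2.image f⟩
    · intro i j hij x hx y hy
      obtain ⟨x', hx', rfl⟩ := Finset.mem_image.1 hx
      obtain ⟨y', hy', rfl⟩ := Finset.mem_image.1 hy
      exact hmono (hsub i hx') (hsub j hy') (hsep i j hij x' hx' y' hy')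
    · intro i
      refine ⟨Finset.mem_coe.2 (Finset.mem_image.2 ⟨mins i, (hleast i).1, rfl⟩), ?_⟩
      rintro y hy
      obtain ⟨y', hy', rfl⟩ := Finset.mem_image.1 hy
      show f (mins i) ≤ f y'
      rcases eq_or_lt_of_le ((hleast i).2 hy') with h | h
      · rw [h]
      · exact (hmono (hsub i (hleast i).1) (hsub i hy') h).le
    · exact hnmin.trans (hle _ (hsub _ (hleast ⟨0, hn⟩).1))
    · exact Finset.biUnion_image

theorem famIter_one (G : Set (Finset ℕ)) : famIter G 1 = famDeriv G := by
  have : (1 : Ordinal) = 0 + 1 := (zero_add 1).symm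
  rw [this, famIter_succ, famIter_zero]

theorem base_hered : Hereditary {E : Finset ℕ | E.card ≤ 1} := by
  intro E F hEF hF
  exact le_trans (Finset.card_le_card hEF) hF

theorem base_spread : Spreading {E : Finset ℕ | E.card ≤ 1} := by
  intro E f _ _ hE
  exact le_trans (Finset.card_image_le) hE

theorem base_LB (m : ℕ) : ∅ ∈ famIter (famRes {E : Finset ℕ | E.card ≤ 1} m) 1 := by
  rw [famIter_one]
  refine ⟨⟨by simp, by simp⟩, ?_⟩
  apply Set.infinite_of_not_bddAbove
  rintro ⟨b, hb⟩
  have : max b m + 1 ∈ {n : ℕ | insert n ∅ ∈ famRes {E : Finset ℕ | E.card ≤ 1} m} := by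
    constructor
    · simp
    · intro k hk
      rw [Finset.mem_insert] at hk
      rcases hk with rfl | hk
      · omega
      · simp at hk
  have := hb this
  omega

theorem base_UB : famIter {E : Finset ℕ | E.card ≤ 1} 1 ⊆ {∅} := by
  rw [famIter_one]
  rintro E ⟨hE, hinf⟩
  by_contra hne
  have hEne : E.Nonempty := Finset.nonempty_iff_ne_empty.2 hne
  refine hinf (Set.Finite.subset E.finite_toSet ?_)
  intro n hn
  by_contra hnE
  have : (insert n E).card = E.card + 1 := Finset.card_insert_of_notMem hnE
  have h1 : E.card = 1 := le_antisymm hE (Finset.card_pos.2 hEne)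
  have h2 : (insert n E).card ≤ 1 := hn
  omega

def famUnionUpTo (T : ℕ → Set (Finset ℕ)) : ℕ → Set (Finset ℕ)
  | 0 => T 0
  | j + 1 => famUnionUpTo T j ∪ T (j + 1)

theorem famUnionUpTo_hered {T : ℕ → Set (Finset ℕ)} (hT : ∀ n, Hereditary (T n)) :
    ∀ j, Hereditary (famUnionUpTo T j)
  | 0 => hT 0
  | j + 1 => (famUnionUpTo_hered hT j).union (hT (j + 1))

theorem subset_famUnionUpTo {T : ℕ → Set (Finset ℕ)} {n j : ℕ} (h : n ≤ j) :
    T n ⊆ famUnionUpTo T j := by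
  induction j with
  | zero => rw [Nat.le_zero.1 h]; exact subset_rfl
  | succ j ih =>
    rcases Nat.le_succ_iff.1 h with h' | h'
    · exact (ih h').trans Set.subset_union_left
    · rw [h']; exact Set.subset_union_right

theorem famIter_famUnionUpTo_subset {T : ℕ → Set (Finset ℕ)} (hT : ∀ n, Hereditary (T n))
    {β : Ordinal} (j : ℕ) (h : ∀ n, n ≤ j → famIter (T n) β ⊆ {∅}) :
    famIter (famUnionUpTo T j) β ⊆ {∅} := by
  induction j with
  | zero => exact h 0 le_rfl
  | succ j ih =>
    show famIter (famUnionUpTo T j ∪ T (j + 1)) β ⊆ {∅}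
    rw [famIter_union (famUnionUpTo_hered hT j) (hT (j + 1))]
    exact Set.union_subset (ih fun n hn => h n (hn.trans (Nat.le_succ j))) (h (j + 1) le_rfl)


theorem schreierSucc_eq (G : Set (Finset ℕ)) : schreierSucc G = schreierSucc' G := rfl

theorem schreier_main (S : Ordinal → Set (Finset ℕ)) (hS : IsSchreierSystem S) :
    ∀ ξ : Ordinal, ξ < (Cardinal.aleph 1).ord →
      Hereditary (S ξ) ∧ Spreading (S ξ) ∧ ∅ ∈ S ξ ∧
      (∀ m : ℕ, ∅ ∈ famIter (famRes (S ξ) m) (Ordinal.omega0 ^ ξ)) ∧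
      famIter (S ξ) (Ordinal.omega0 ^ ξ) ⊆ {∅} := by
  intro ξ
  induction ξ using Ordinal.limitRecOn with
  | zero =>
    intro _
    rw [hS.1, Ordinal.opow_zero]
    exact ⟨base_hered, base_spread, by simp, base_LB, base_UB⟩
  | add_one ξ ih =>
    intro hlt
    have hξ : ξ < (Cardinal.aleph 1).ord := lt_trans (Order.lt_add_one_iff.2 le_rfl) hlt
    obtain ⟨h1, h2, h3, h4, h5⟩ := ih hξ
    have hrw : S (ξ + 1) = schreierSucc' (S ξ) := by
      rw [hS.2.1 ξ, schreierSucc_eq]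
    have hopow : Ordinal.omega0 ^ (ξ + 1) = Ordinal.omega0 ^ ξ * Ordinal.omega0 := by
      rw [Ordinal.add_one_eq_succ]; exact Ordinal.opow_succ _ _
    have ha : (0 : Ordinal) < Ordinal.omega0 ^ ξ := Ordinal.opow_pos _ Ordinal.omega0_pos
    rw [hrw, hopow]
    exact ⟨h1.schreierSucc', h2.schreierSucc', Or.inl rfl,
      fun m => schreierSucc_lower ha h4 m,
      schreierSucc_upper h1 h3 h5⟩
  | limit ξ hlim ih =>
    intro hlt
    obtain ⟨f, hfmono, hflt, hfsup, _hfincl, hfdesc⟩ := hS.2.2 ξ hlt hlim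
    have hfs : ∀ n, f n + 1 < ξ := fun n => by
      rw [Ordinal.add_one_eq_succ]; exact hlim.succ_lt (hflt n)
    have hIH : ∀ n, Hereditary (S (f n + 1)) ∧ Spreading (S (f n + 1)) ∧ ∅ ∈ S (f n + 1) ∧
        (∀ m, ∅ ∈ famIter (famRes (S (f n + 1)) m) (Ordinal.omega0 ^ (f n + 1))) ∧
        famIter (S (f n + 1)) (Ordinal.omega0 ^ (f n + 1)) ⊆ {∅} :=
      fun n => ih _ (hfs n) (lt_trans (hfs n) hlt)
    have hmemiff : ∀ E : Finset ℕ,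
        E ∈ S ξ ↔ (E = ∅ ∨ ∃ n : ℕ, (∀ m ∈ E, n ≤ m) ∧ E ∈ S (f n + 1)) := fun E => by
      rw [hfdesc]; rfl
    have hered : Hereditary (S ξ) := by
      intro E F hEF hF
      rcases (hmemiff F).1 hF with rfl | ⟨n, hmin, hFn⟩
      · exact (hmemiff E).2 (Or.inl (Finset.subset_empty.1 hEF))
      · exact (hmemiff E).2
          (Or.inr ⟨n, fun x hx => hmin x (hEF hx), (hIH n).1 hEF hFn⟩)
    have hspread : Spreading (S ξ) := by
      intro E g hmono hle hE
      rcases (hmemiff E).1 hE with rfl | ⟨n, hmin, hEn⟩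
      · exact (hmemiff _).2 (Or.inl (Finset.image_empty g))
      · refine (hmemiff _).2 (Or.inr ⟨n, ?_, (hIH n).2.1 E g hmono hle hEn⟩)
        intro y hy
        obtain ⟨x, hx, rfl⟩ := Finset.mem_image.1 hy
        exact (hmin x hx).trans (hle x hx)
    have hωlim : Order.IsSuccLimit (Ordinal.omega0 ^ ξ) :=
      Ordinal.isSuccLimit_opow Ordinal.one_lt_omega0 hlim
    have hLB : ∀ m : ℕ, ∅ ∈ famIter (famRes (S ξ) m) (Ordinal.omega0 ^ ξ) := by
      intro m
      rw [famIter_limit _ hωlim]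
      refine Set.mem_iInter₂.2 fun β hβ => ?_
      obtain ⟨ζ, hζξ, hβζ⟩ := (Ordinal.lt_opow_of_isSuccLimit Ordinal.omega0_ne_zero hlim).1 hβ
      have hζs : ζ < ⨆ n, f n := hfsup ▸ hζξ
      obtain ⟨n, hn⟩ := Ordinal.lt_iSup_iff.1 hζs
      have hβle : β ≤ Ordinal.omega0 ^ (f n + 1) := by
        refine le_trans hβζ.le (Ordinal.opow_le_opow_right Ordinal.omega0_pos ?_)
        exact hn.le.trans (le_self_add (b := 1))
      have hsub : famRes (S (f n + 1)) (max m n) ⊆ famRes (S ξ) m := by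
        rintro E ⟨hE1, hE2⟩
        exact ⟨(hmemiff E).2 (Or.inr ⟨n, fun x hx => le_trans (le_max_right m n) (hE2 x hx),
          hE1⟩), fun x hx => le_trans (le_max_left m n) (hE2 x hx)⟩
      exact famIter_antitone _ hβle
        (famIter_mono hsub _ ((hIH n).2.2.2.1 (max m n)))
    refine ⟨hered, hspread, (hmemiff ∅).2 (Or.inl rfl), hLB, ?_⟩
    intro E hE
    by_cases hne : E = ∅
    · exact hne
    exfalso
    have hEne : E.Nonempty := Finset.nonempty_iff_ne_empty.2 hne
    set q := E.min' hEne with hq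
    set T : ℕ → Set (Finset ℕ) := fun n => S (f n + 1) with hT
    have hTh : ∀ n, Hereditary (T n) := fun n => (hIH n).1
    set β := Ordinal.omega0 ^ (f q + 1) with hβ
    have h1 : famIter (famUnionUpTo T q) β ⊆ {∅} := by
      refine famIter_famUnionUpTo_subset hTh q fun n hn => ?_
      refine (famIter_antitone _ ?_).trans (hIH n).2.2.2.2
      apply Ordinal.opow_le_opow_right Ordinal.omega0_pos
      exact add_le_add_left (hfmono.monotone hn) 1
    have h2 : E ∈ famIter (S ξ) β := by
      refine famIter_antitone _ ?_ hE
      exact Ordinal.opow_le_opow_right Ordinal.omega0_pos (hfs q).le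
    have h3 : E ∈ famIter (famUnionUpTo T q) β := by
      refine famIter_loc _ E h2 ?_
      intro F hF hEF
      rcases (hmemiff F).1 hF with rfl | ⟨n, hmin, hFn⟩
      · exact absurd (Finset.subset_empty.1 (hEF.trans subset_rfl)) hne
      · have hnq : n ≤ q := hmin q (hEF (E.min'_mem hEne))
        exact subset_famUnionUpTo hnq hFn
    exact hne (h1 h3)


theorem toCantor_injective : Function.Injective toCantor := by
  intro E F h
  ext n
  have := congrFun h n
  simpa [toCantor, decide_eq_decide] using this

theorem toCantor_apply_iff {E F : Finset ℕ} {i : ℕ} :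
    toCantor E i = toCantor F i ↔ (i ∈ E ↔ i ∈ F) := by
  simp [toCantor, decide_eq_decide]


@[simp] theorem cbIter_zero {α : Type*} [TopologicalSpace α] (K : Set α) : cbIter K 0 = K :=
  Ordinal.limitRecOn_zero ..

theorem cbIter_succ {α : Type*} [TopologicalSpace α] (K : Set α) (β : Ordinal) :
    cbIter K (β + 1) = cbDeriv (cbIter K β) := by
  rw [cbIter, Ordinal.add_one_eq_succ, Ordinal.limitRecOn_succ]; rfl

theorem cbIter_limit {α : Type*} [TopologicalSpace α] (K : Set α) {β : Ordinal}
    (h : Order.IsSuccLimit β) : cbIter K β = ⋂ (ζ) (_ : ζ < β), cbIter K ζ := by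
  rw [cbIter, Ordinal.limitRecOn_limit _ _ _ _ h]; rfl

theorem closure_approx {s : Set (ℕ → Bool)} {x : ℕ → Bool} (hx : x ∈ closure s) (N : ℕ) :
    ∃ y ∈ s, ∀ i ≤ N, y i = x i := by
  have hU : IsOpen {y : ℕ → Bool | ∀ i ≤ N, y i = x i} := by
    have heq : {y : ℕ → Bool | ∀ i ≤ N, y i = x i} =
        ⋂ i ∈ Set.Iic N, (fun y : ℕ → Bool => y i) ⁻¹' {x i} := by
      ext y
      simp [Set.mem_Iic]
    rw [heq]
    exact (Set.finite_Iic N).isOpen_biInter fun i _ =>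
      (continuous_apply i).isOpen_preimage _ (isOpen_discrete _)
  obtain ⟨y, hyU, hys⟩ := mem_closure_iff.1 hx _ hU (fun i _ => rfl)
  exact ⟨y, hys, hyU⟩

theorem cbDeriv_image {G : Set (Finset ℕ)} (hG : Hereditary G) :
    cbDeriv (toCantor '' G) = toCantor '' famDeriv G := by
  apply Set.Subset.antisymm
  · rintro x ⟨⟨E, hE, rfl⟩, hcl⟩
    refine ⟨E, ⟨hE, ?_⟩, rfl⟩
    apply Set.infinite_of_not_bddAbove
    rintro ⟨b, hb⟩
    set N := max b (E.sup id) with hN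
    obtain ⟨y, ⟨⟨F, hF, rfl⟩, hne⟩, hagree⟩ := closure_approx hcl N
    have hEF : E ⊆ F := by
      intro a ha
      have h1 : a ≤ N := le_trans (Finset.le_sup (f := id) ha) (le_max_right _ _)
      exact (toCantor_apply_iff.1 (hagree a h1)).2 ha
    have hFE : ¬ F ⊆ E := by
      intro h
      exact hne (by rw [Finset.Subset.antisymm h hEF]; exact rfl)
    obtain ⟨n, hn⟩ := Finset.sdiff_nonempty.2 hFE
    have hnF : n ∈ F := (Finset.mem_sdiff.1 hn).1
    have hnE : n ∉ E := (Finset.mem_sdiff.1 hn).2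
    have hnN : ¬ n ≤ N := by
      intro hle
      exact hnE ((toCantor_apply_iff.1 (hagree n hle)).1 hnF)
    have hmem : insert n E ∈ G := hG (Finset.insert_subset hnF hEF) hF
    have := hb (Set.mem_setOf.2 hmem)
    omega
  · rintro x ⟨E, ⟨hE, hinf⟩, rfl⟩
    refine ⟨⟨E, hE, rfl⟩, ?_⟩
    rw [mem_closure_iff]
    intro O hO hxO
    obtain ⟨I, u, hIu, hsub⟩ := isOpen_pi_iff.1 hO _ hxO
    set N := I.sup id with hNdef
    obtain ⟨n, hn⟩ := ((hinf.diff (E.finite_toSet)).diff (Set.finite_Iic N)).nonempty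
    have hnG : insert n E ∈ G := hn.1.1
    have hnE : n ∉ E := hn.1.2
    have hnN : ¬ n ≤ N := hn.2
    refine ⟨toCantor (insert n E), ?_, ⟨insert n E, hnG, rfl⟩, ?_⟩
    · apply hsub
      intro i hi
      have hiN : i ≤ N := Finset.le_sup (f := id) hi
      have : toCantor (insert n E) i = toCantor E i := by
        rw [toCantor_apply_iff, Finset.mem_insert]
        constructor
        · rintro (rfl | h)
          · omega
          · exact h
        · exact fun h => Or.inr h
      rw [this]
      exact (hIu i hi).2
    · simp only [Set.mem_singleton_iff]
      intro h
      exact hnE (by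
        have := toCantor_injective h
        rw [← this]
        exact Finset.mem_insert_self n E)
  
theorem cbIter_image {G : Set (Finset ℕ)} (hG : Hereditary G) (α : Ordinal) :
    cbIter (toCantor '' G) α = toCantor '' famIter G α := by
  induction α using Ordinal.limitRecOn with
  | zero => simp
  | add_one a ih =>
    rw [cbIter_succ, famIter_succ, ih, cbDeriv_image (hG.famIter a)]
  | limit a ha ih =>
    rw [cbIter_limit _ ha, famIter_limit _ ha]
    apply Set.Subset.antisymm
    · intro x hx
      have h0 := Set.mem_iInter₂.1 hx 0 ha.pos
      rw [ih 0 ha.pos] at h0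
      obtain ⟨E, hE0, rfl⟩ := h0
      refine ⟨E, Set.mem_iInter₂.2 fun ζ hζ => ?_, rfl⟩
      have := Set.mem_iInter₂.1 hx ζ hζ
      rw [ih ζ hζ] at this
      obtain ⟨E', hE', heq⟩ := this
      rwa [← toCantor_injective heq]
    · rintro x ⟨E, hE, rfl⟩
      exact Set.mem_iInter₂.2 fun ζ hζ => by
        rw [ih ζ hζ]
        exact ⟨E, Set.mem_iInter₂.1 hE ζ hζ, rfl⟩

theorem all_subsets_mem_iter {G : Set (Finset ℕ)} {A : Set ℕ} (hA : A.Infinite)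
    (hall : ∀ F : Finset ℕ, ↑F ⊆ A → F ∈ G) (α : Ordinal) :
    ∀ F : Finset ℕ, ↑F ⊆ A → F ∈ famIter G α := by
  induction α using Ordinal.limitRecOn with
  | zero => simpa using hall
  | add_one a ih =>
    intro F hF
    rw [famIter_succ]
    refine ⟨ih F hF, (hA.diff F.finite_toSet).mono ?_⟩
    intro n hn
    show insert n F ∈ famIter G a
    refine ih _ ?_
    rw [Finset.coe_insert]
    exact Set.insert_subset hn.1 hF
  | limit a ha ih =>
    intro F hF
    rw [famIter_limit _ ha]
    exact Set.mem_iInter₂.2 fun ζ hζ => ih ζ hζ F hF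

theorem isClosed_image {G : Set (Finset ℕ)} (hG : Hereditary G) {a : Ordinal}
    (hUB : famIter G a ⊆ {∅}) : IsClosed (toCantor '' G) := by
  rw [← isOpen_compl_iff]
  rw [isOpen_compl_iff]
  apply isClosed_of_closure_subset
  intro x hx
  set A : Set ℕ := {n | x n = true} with hA
  by_cases hAfin : A.Finite
  · set E := hAfin.toFinset with hE
    have hxE : x = toCantor E := by
      funext n
      by_cases h : x n = true
      · rw [h]
        have : n ∈ E := hAfin.mem_toFinset.2 h
        simp [toCantor, this]
      · have hx' : x n = false := by
          cases hxn : x n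
          · rfl
          · exact absurd hxn h
        rw [hx']
        have : n ∉ E := fun hc => h (hAfin.mem_toFinset.1 hc)
        simp [toCantor, this]
    rw [hxE] at hx ⊢
    obtain ⟨y, ⟨F, hF, rfl⟩, hagree⟩ := closure_approx hx (E.sup id)
    refine ⟨E, hG ?_ hF, rfl⟩
    intro i hi
    exact (toCantor_apply_iff.1 (hagree i (Finset.le_sup (f := id) hi))).2 hi
  · exfalso
    have hAinf : A.Infinite := hAfin
    have hall : ∀ F : Finset ℕ, ↑F ⊆ A → F ∈ G := by
      intro F hFA
      obtain ⟨y, ⟨F', hF', rfl⟩, hagree⟩ := closure_approx hx (F.sup id)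
      refine hG ?_ hF'
      intro i hi
      have hiN : i ≤ F.sup id := Finset.le_sup (f := id) hi
      have : toCantor F' i = x i := hagree i hiN
      have hxi : x i = true := hFA hi
      rw [hxi] at this
      simpa [toCantor] using this
    obtain ⟨a₀, ha₀⟩ := hAinf.nonempty
    have : ({a₀} : Finset ℕ) ∈ famIter G a :=
      all_subsets_mem_iter hAinf hall a {a₀} (by simpa using ha₀)
    exact Finset.singleton_ne_empty a₀ (hUB this)

theorem famDeriv_singleton_empty : famDeriv {(∅ : Finset ℕ)} = ∅ := by
  ext E
  simp only [famDeriv, Set.mem_setOf_eq, Set.mem_singleton_iff, Set.mem_empty_iff_false,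
    iff_false, not_and]
  rintro rfl
  intro hinf
  refine hinf (Set.Finite.subset (Set.finite_empty) ?_)
  intro n hn
  exact absurd hn (by simp)



/-- For every countable ordinal `ξ`, the Schreier family `𝒮_ξ` is regular and its
Cantor–Bendixson index equals `ω^ξ + 1`. -/
theorem schreier_regular_CB (S : Ordinal → Set (Finset ℕ)) (hS : IsSchreierSystem S)
    (ξ : Ordinal) (hξ : ξ < (Cardinal.aleph 1).ord) :
    IsRegularFam (S ξ) ∧
    cbIter (toCantor '' S ξ) (Ordinal.omega0 ^ ξ + 1) = ∅ ∧
    cbIter (toCantor '' S ξ) (Ordinal.omega0 ^ ξ) ≠ ∅ := by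
  obtain ⟨h1, h2, h3, h4, h5⟩ := schreier_main S hS ξ hξ
  have hLB0 : ∅ ∈ famIter (S ξ) (Ordinal.omega0 ^ ξ) := by
    have := h4 0
    rwa [famRes_zero] at this
  have hiter : famIter (S ξ) (Ordinal.omega0 ^ ξ) = {∅} :=
    Set.Subset.antisymm h5 (Set.singleton_subset_iff.2 hLB0)
  refine ⟨⟨(isClosed_image h1 h5).isCompact, h1, h2⟩, ?_, ?_⟩
  · rw [cbIter_image h1, famIter_succ, hiter, famDeriv_singleton_empty, Set.image_empty]
  · rw [cbIter_image h1, hiter]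
    simp
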